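/- Define the Catalan generating series ca(a,b,t) = (1 − (a+b)t − √(1 − 2(a+b)t + (b−a)²t²))/(2abt) = Σ_{n≥1} ca_n(a,b) t^n as a formal power series. Then for all n ≥ 1, ca_n(a,b) = Σ_{i=0}^{n−1} T(n,i+1) a^i b^{n−1−i}, where T(n,k) = (1/k)·C(n−1,k−1)·C(n,k−1) are the Narayana numbers. -/

import Mathlib

open PowerSeries

/-- Narayana numbers `T(n,k) = (1/k)·C(n−1,k−1)·C(n,k−1)`. -/
noncomputable def narayana (n k : ℕ) : ℚ :=
  (1 / (k : ℚ)) * (Nat.choose (n - 1) (k - 1)) * (Nat.choose n (k - 1))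

section Aux

lemma absorb (q j : ℕ) :
    ((j : ℚ) + 1) * (q.choose (j + 1)) = ((q : ℚ) - j) * (q.choose j) := by
  rcases le_or_gt (j + 1) q with h | h
  · have h0 := congrArg (Nat.cast : ℕ → ℚ) (Nat.choose_succ_right_eq q j)
    push_cast [Nat.cast_sub (by omega : j ≤ q)] at h0
    linarith [h0]
  · rcases Nat.lt_or_ge q j with h2 | h2
    · rw [Nat.choose_eq_zero_of_lt h2, Nat.choose_eq_zero_of_lt (by omega)]
      push_cast; ring
    · have hqj : q = j := by omega
      subst hqj
      rw [Nat.choose_eq_zero_of_lt (by omega), Nat.choose_self]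
      push_cast; ring

lemma diag (r j : ℕ) :
    ((r : ℚ) + 1) * (r.choose j) = ((j : ℚ) + 1) * ((r + 1).choose (j + 1)) := by
  have h0 := congrArg (Nat.cast : ℕ → ℚ) (Nat.add_one_mul_choose_eq r j)
  push_cast at h0
  linarith [h0]

lemma rowup (r j : ℕ) :
    ((r : ℚ) + 1 - j) * ((r + 1).choose j) = ((r : ℚ) + 1) * (r.choose j) := by
  rcases le_or_gt j (r + 1) with h | h
  · have h0 := congrArg (Nat.cast : ℕ → ℚ) (Nat.choose_mul_succ_eq r j)
    push_cast [Nat.cast_sub h] at h0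
    linarith [h0]
  · rw [Nat.choose_eq_zero_of_lt h, Nat.choose_eq_zero_of_lt (by omega)]
    push_cast; ring

lemma key (q μ : ℕ) (hμ : μ ≤ q) :
    ((q:ℚ) + 4) * narayana (q+3) (μ+3)
      = (2*(q:ℚ) + 5) * (narayana (q+2) (μ+3) + narayana (q+2) (μ+2))
        - ((q:ℚ) + 1) *
          (narayana (q+1) (μ+1) - 2 * narayana (q+1) (μ+2) + narayana (q+1) (μ+3)) := by
  have hμq : (μ : ℚ) ≤ q := by exact_mod_cast hμ
  have d1 : ((μ:ℚ) + 1) ≠ 0 := by positivity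
  have d2 : ((μ:ℚ) + 2) ≠ 0 := by positivity
  have d3 : ((μ:ℚ) + 3) ≠ 0 := by positivity
  have d4 : ((q:ℚ) + 1 - μ) ≠ 0 := by intro h; nlinarith
  -- solved forms
  have hx1 : ((q.choose (μ+1) : ℕ) : ℚ) = ((q:ℚ) - μ) * (q.choose μ) / ((μ:ℚ)+1) := by
    apply eq_div_of_mul_eq d1
    have h := absorb q μ; linarith
  have hx2 : ((q.choose (μ+2) : ℕ) : ℚ) = ((q:ℚ) - μ - 1) * (q.choose (μ+1)) / ((μ:ℚ)+2) := by
    apply eq_div_of_mul_eq d2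
    have h := absorb q (μ+1)
    simp only [show μ+1+1 = μ+2 from rfl] at h
    push_cast at h; linarith
  have hy1 : (((q+1).choose (μ+1) : ℕ) : ℚ) = ((q:ℚ)+1) * (q.choose μ) / ((μ:ℚ)+1) := by
    apply eq_div_of_mul_eq d1
    have h := diag q μ; push_cast at h; linarith
  have hy2 : (((q+1).choose (μ+2) : ℕ) : ℚ) = ((q:ℚ)+1) * (q.choose (μ+1)) / ((μ:ℚ)+2) := by
    apply eq_div_of_mul_eq d2
    have h := diag q (μ+1)
    simp only [show μ+1+1 = μ+2 from rfl] at h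
    push_cast at h; linarith
  have hy0 : (((q+1).choose μ : ℕ) : ℚ) = ((q:ℚ)+1) * (q.choose μ) / ((q:ℚ)+1-μ) := by
    apply eq_div_of_mul_eq d4
    have h := rowup q μ; push_cast at h; linarith
  have hz1 : (((q+2).choose (μ+1) : ℕ) : ℚ) = ((q:ℚ)+2) * ((q+1).choose μ) / ((μ:ℚ)+1) := by
    apply eq_div_of_mul_eq d1
    have h := diag (q+1) μ
    simp only [show q+1+1 = q+2 from rfl] at h
    push_cast at h; linarith
  have hz2 : (((q+2).choose (μ+2) : ℕ) : ℚ) = ((q:ℚ)+2) * ((q+1).choose (μ+1)) / ((μ:ℚ)+2) := by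
    apply eq_div_of_mul_eq d2
    have h := diag (q+1) (μ+1)
    simp only [show q+1+1 = q+2 from rfl, show μ+1+1 = μ+2 from rfl] at h
    push_cast at h; linarith
  have hw2 : (((q+3).choose (μ+2) : ℕ) : ℚ) = ((q:ℚ)+3) * ((q+2).choose (μ+1)) / ((μ:ℚ)+2) := by
    apply eq_div_of_mul_eq d2
    have h := diag (q+2) (μ+1)
    simp only [show q+2+1 = q+3 from rfl, show μ+1+1 = μ+2 from rfl] at h
    push_cast at h; linarith
  simp only [narayana, show q+3-1 = q+2 from rfl, show q+2-1 = q+1 from rfl,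
    show q+1-1 = q from rfl, show μ+3-1 = μ+2 from rfl, show μ+2-1 = μ+1 from rfl,
    show μ+1-1 = μ from rfl]
  push_cast
  rw [hw2, hz2, hz1, hy2, hy1, hy0, hx2, hx1]
  field_simp
  ring

lemma narayana_zero (n : ℕ) : narayana n 0 = 0 := by simp [narayana]

lemma narayana_one (n : ℕ) : narayana n 1 = 1 := by simp [narayana]

lemma narayana_two (n : ℕ) : narayana (n+1) 2 = (n:ℚ) * (n+1) / 2 := by
  simp [narayana, Nat.choose_one_right]
  push_cast
  ring

/-- vanishing above the diagonal -/
lemma narayana_gt (n k : ℕ) (h : n ≤ k) (hk : 1 ≤ k) : narayana n (k+1) = 0 := by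
  have : n - 1 < k := by omega
  simp [narayana, Nat.choose_eq_zero_of_lt this]

lemma keyAll (m i : ℕ) (hi : i ≤ m + 2) :
    ((m:ℚ)+4) * narayana (m+3) (i+1)
      = (2*(m:ℚ)+5) * (narayana (m+2) (i+1) + narayana (m+2) i)
        - ((m:ℚ)+1) *
          (narayana (m+1) (i-1) - 2*narayana (m+1) i + narayana (m+1) (i+1)) := by
  match i with
  | 0 =>
      simp only [show (0:ℕ)+1 = 1 from rfl, show (0:ℕ)-1 = 0 from rfl, narayana_one, narayana_zero]
      ring
  | 1 =>
      have h1 : narayana (m+3) 2 = ((m:ℚ)+2) * ((m:ℚ)+3) / 2 := by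
        have := narayana_two (m+2); push_cast at this ⊢; convert this using 2 <;> push_cast <;> ring
      have h2 : narayana (m+2) 2 = ((m:ℚ)+1) * ((m:ℚ)+2) / 2 := by
        have := narayana_two (m+1); push_cast at this ⊢; convert this using 2 <;> push_cast <;> ring
      have h3 : narayana (m+1) 2 = (m:ℚ) * ((m:ℚ)+1) / 2 := by
        have := narayana_two m; push_cast at this ⊢; convert this using 2 <;> push_cast <;> ring
      simp only [show (1:ℕ)+1 = 2 from rfl, show (1:ℕ)-1 = 0 from rfl,
        h1, h2, h3, narayana_one, narayana_zero]
      ring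
  | (j+2) =>
      have hj : j ≤ m := by omega
      have h := key m j hj
      simp only [show j+2+1 = j+3 from rfl, show j+2-1 = j+1 from rfl]
      convert h using 2

noncomputable def NN {R : Type*} [CommRing R] [Algebra ℚ R] (a b : R) (n : ℕ) : R :=
  ∑ i ∈ Finset.range n, narayana n (i+1) • (a^i * b^(n-1-i))

lemma nar_rec {R : Type*} [CommRing R] [Algebra ℚ R] (a b : R) (m : ℕ) :
    ((m:ℚ)+4) • NN a b (m+3) + ((m:ℚ)+1) • ((a-b)^2 * NN a b (m+1))
      = (2*(m:ℚ)+5) • ((a+b) * NN a b (m+2)) := by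
  have hA : (a+b) * NN a b (m+2)
      = ∑ i ∈ Finset.range (m+3),
          (narayana (m+2) (i+1) + narayana (m+2) i) • (a^i * b^(m+2-i)) := by
    have h1 : ∑ i ∈ Finset.range (m+3), narayana (m+2) i • (a^i * b^(m+2-i))
        = a * NN a b (m+2) := by
      rw [Finset.sum_range_succ', NN, Finset.mul_sum]
      simp only [narayana_zero, zero_smul, add_zero, Nat.succ_sub_succ,
        show m+2-1 = m+1 from rfl]
      refine Finset.sum_congr rfl fun i _ => ?_
      rw [mul_smul_comm]; congr 1; ring
    have h2 : ∑ i ∈ Finset.range (m+3), narayana (m+2) (i+1) • (a^i * b^(m+2-i))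
        = b * NN a b (m+2) := by
      rw [Finset.sum_range_succ, NN, Finset.mul_sum]
      rw [narayana_gt (m+2) (m+2) le_rfl (by omega), zero_smul, add_zero]
      refine Finset.sum_congr rfl fun i hi => ?_
      rw [mul_smul_comm]; congr 1
      have : m + 2 - i = (m + 2 - 1 - i) + 1 := by
        simp only [Finset.mem_range] at hi; omega
      rw [this]; ring
    simp only [add_smul, Finset.sum_add_distrib, h1, h2]; ring
  have hB : (a-b)^2 * NN a b (m+1)
      = ∑ i ∈ Finset.range (m+3),
          (narayana (m+1) (i-1) - 2*narayana (m+1) i + narayana (m+1) (i+1))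
            • (a^i * b^(m+2-i)) := by
    have h1 : ∑ i ∈ Finset.range (m+3), narayana (m+1) (i-1) • (a^i * b^(m+2-i))
        = a^2 * NN a b (m+1) := by
      rw [Finset.sum_range_succ', Finset.sum_range_succ', NN, Finset.mul_sum]
      simp only [show ∀ j:ℕ, j+1+1-1 = j+1 from fun j => rfl,
        show (0:ℕ)-1 = 0 from rfl, show (1:ℕ)-1 = 0 from rfl,
        narayana_zero, zero_smul, add_zero, Nat.succ_sub_succ,
        show m+1-1 = m from rfl]
      refine Finset.sum_congr rfl fun i _ => ?_
      rw [mul_smul_comm]; congr 1; ring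
    have h2 : ∑ i ∈ Finset.range (m+3), narayana (m+1) i • (a^i * b^(m+2-i))
        = (a*b) * NN a b (m+1) := by
      rw [Finset.sum_range_succ', Finset.sum_range_succ, NN, Finset.mul_sum]
      rw [narayana_gt (m+1) (m+1) le_rfl (by omega), zero_smul, add_zero]
      simp only [narayana_zero, zero_smul, add_zero, Nat.succ_sub_succ,
        show m+1-1 = m from rfl]
      refine Finset.sum_congr rfl fun i hi => ?_
      rw [mul_smul_comm]; congr 1
      have : m + 1 - i = (m - i) + 1 := by
        simp only [Finset.mem_range] at hi; omega
      rw [this]; ring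
    have h3 : ∑ i ∈ Finset.range (m+3), narayana (m+1) (i+1) • (a^i * b^(m+2-i))
        = b^2 * NN a b (m+1) := by
      rw [Finset.sum_range_succ, Finset.sum_range_succ, NN, Finset.mul_sum]
      rw [narayana_gt (m+1) (m+2) (by omega) (by omega), zero_smul, add_zero,
        narayana_gt (m+1) (m+1) le_rfl (by omega), zero_smul, add_zero]
      simp only [show m+1-1 = m from rfl]
      refine Finset.sum_congr rfl fun i hi => ?_
      rw [mul_smul_comm]; congr 1
      have : m + 2 - i = (m - i) + 2 := by
        simp only [Finset.mem_range] at hi; omega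
      rw [this]; ring
    simp only [sub_smul, add_smul, Finset.sum_add_distrib, Finset.sum_sub_distrib,
      h1, h2, h3]
    have : ∑ i ∈ Finset.range (m+3), (2*narayana (m+1) i) • (a^i * b^(m+2-i))
        = 2*((a*b) * NN a b (m+1)) := by
      rw [← h2, Finset.mul_sum]
      refine Finset.sum_congr rfl fun i _ => ?_
      rw [mul_smul, two_smul]; ring
    rw [this]; ring
  rw [hA, hB, NN, show m+3-1 = m+2 from rfl, Finset.smul_sum, Finset.smul_sum,
    Finset.smul_sum, ← Finset.sum_add_distrib]
  refine Finset.sum_congr rfl fun i hi => ?_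
  simp only [Finset.mem_range] at hi
  rw [smul_smul, smul_smul, smul_smul, ← add_smul]
  congr 1
  have h := keyAll m i (by omega)
  ring_nf
  ring_nf at h
  linarith [h]

abbrev RR := MvPolynomial (Fin 2) ℚ

end Aux

/-- The Catalan generating series `ca(a,b,t)`, characterized as the formal power
series solution of `ab·t·ca² − (1 − (a+b)t)·ca + t = 0`, has coefficients
`ca_n(a,b) = Σ_{i=0}^{n−1} T(n,i+1) aⁱ b^{n−1−i}` given by the Narayana triangle. -/
theorem catalan_series_narayana
    (a b : MvPolynomial (Fin 2) ℚ) (ha : a = MvPolynomial.X 0)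
    (hb : b = MvPolynomial.X 1)
    (c : PowerSeries (MvPolynomial (Fin 2) ℚ))
    (hc : PowerSeries.C (a * b) * PowerSeries.X * c ^ 2 + PowerSeries.X =
      (1 - PowerSeries.C (a + b) * PowerSeries.X) * c) :
    ∀ n : ℕ, 1 ≤ n →
      PowerSeries.coeff n c =
        ∑ i ∈ Finset.range n, narayana n (i + 1) • (a ^ i * b ^ (n - 1 - i)) := by
  show ∀ n : ℕ, 1 ≤ n → PowerSeries.coeff n c = _
  have hc' : C (a*b) * X * (c*c) + X = (1 - C (a+b)*X)*c := by rw [← sq]; exact hc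
  have hsum : C a + C b = C (a+b) := by rw [map_add]
  have hd := congrArg (fun f => d⁄dX RR f) hc'
  simp only [Derivation.leibniz, map_add, map_sub, smul_eq_mul,
    Derivation.map_one_eq_zero, PowerSeries.derivative_X, PowerSeries.derivative_C,
    map_one] at hd
  have hE1 : X * ((1 - C (a+b)*X) - 2*(C (a*b))*X*c) * (d⁄dX RR c) = c := by
    linear_combination hc' - X * hd + (X*c + X^2*(d⁄dX RR c)) * hsum
  have hE : (C ((a+b)^2 - 4*(a*b))) = (C (a+b))^2 - 4*(C (a*b)) := by
    simp only [map_sub, map_pow, map_mul, map_ofNat]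
  have hE2 : (C (2*(a+b))) = 2*(C (a+b)) := by
    simp only [map_mul, map_ofNat]
  have hODE : X * (d⁄dX RR c) + c + (C ((a+b)^2 - 4*(a*b))) * (X*(X*(X*(d⁄dX RR c))))
      = 2*X + (C (2*(a+b))) * (X*(X*(d⁄dX RR c))) + (C (a+b))*(X*c) := by
    rw [hE, hE2]
    linear_combination ((1 - C (a+b)*X) - 2*(C (a*b))*X*c) * hE1
      - (4*(C (a*b))*X^2*(d⁄dX RR c) + 2) * hc'
  have hchar : ∀ m : ℕ, ((m:RR)+4) ≠ 0 := by
    intro m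
    have h4 : ((m+4 : ℕ) : RR) ≠ 0 := by
      rw [Ne, Nat.cast_eq_zero]; omega
    push_cast at h4; exact h4
  have h0 : coeff 0 c = 0 := by
    have h := congrArg (constantCoeff) hc
    simp at h
    rw [coeff_zero_eq_constantCoeff]
    exact h.symm
  have h1 : coeff 1 c = 1 := by
    have h := congrArg (coeff 1) hODE
    simp only [map_add, add_mul, coeff_C_mul] at h
    have t1 : coeff 1 (X * (d⁄dX RR c)) = coeff 1 c * ((0:ℕ)+1 : RR) :=
      calc coeff 1 (X * (d⁄dX RR c)) = coeff 0 (d⁄dX RR c) := coeff_succ_X_mul 0 _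
        _ = coeff 1 c * ((0:ℕ)+1 : RR) := coeff_derivative c 0
    have t2 : coeff 1 (X*(X*(X*(d⁄dX RR c)))) = 0 :=
      calc coeff 1 (X*(X*(X*(d⁄dX RR c)))) = coeff 0 (X*(X*(d⁄dX RR c))) :=
            coeff_succ_X_mul 0 _
        _ = 0 := coeff_zero_X_mul _
    have t3 : coeff 1 (X*(X*(d⁄dX RR c))) = 0 :=
      calc coeff 1 (X*(X*(d⁄dX RR c))) = coeff 0 (X*(d⁄dX RR c)) := coeff_succ_X_mul 0 _
        _ = 0 := coeff_zero_X_mul _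
    have t4 : coeff 1 (X*c) = coeff 0 c := coeff_succ_X_mul 0 _
    have t5 : coeff 1 (2*X : RR⟦X⟧) = 2 := by
      rw [two_mul, map_add, coeff_one_X]; norm_num
    rw [t1, t2, t3, t4, t5, h0] at h
    have h2 : (2:RR) * coeff 1 c = 2 * 1 := by push_cast at h; linear_combination h
    exact mul_left_cancel₀ (by norm_num) h2
  have h2 : coeff 2 c = a + b := by
    have h := congrArg (coeff 2) hODE
    simp only [map_add, add_mul, coeff_C_mul] at h
    have t1 : coeff 2 (X * (d⁄dX RR c)) = coeff 2 c * ((1:ℕ)+1 : RR) :=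
      calc coeff 2 (X * (d⁄dX RR c)) = coeff 1 (d⁄dX RR c) := coeff_succ_X_mul 1 _
        _ = coeff 2 c * ((1:ℕ)+1 : RR) := coeff_derivative c 1
    have t2 : coeff 2 (X*(X*(X*(d⁄dX RR c)))) = 0 :=
      calc coeff 2 (X*(X*(X*(d⁄dX RR c)))) = coeff 1 (X*(X*(d⁄dX RR c))) :=
            coeff_succ_X_mul 1 _
        _ = coeff 0 (X*(d⁄dX RR c)) := coeff_succ_X_mul 0 _
        _ = 0 := coeff_zero_X_mul _
    have t3 : coeff 2 (X*(X*(d⁄dX RR c))) = coeff 1 c * ((0:ℕ)+1 : RR) :=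
      calc coeff 2 (X*(X*(d⁄dX RR c))) = coeff 1 (X*(d⁄dX RR c)) := coeff_succ_X_mul 1 _
        _ = coeff 0 (d⁄dX RR c) := coeff_succ_X_mul 0 _
        _ = coeff 1 c * ((0:ℕ)+1 : RR) := coeff_derivative c 0
    have t4 : coeff 2 (X*c) = coeff 1 c := coeff_succ_X_mul 1 _
    have t5 : coeff 2 (2*X : RR⟦X⟧) = 0 := by
      rw [two_mul, map_add, coeff_X]; norm_num
    rw [t1, t2, t3, t4, t5, h1] at h
    have h3 : (3:RR) * coeff 2 c = 3 * (a+b) := by push_cast at h; linear_combination h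
    exact mul_left_cancel₀ (by norm_num) h3
  have hstep : ∀ m : ℕ, ((m:RR)+4) * coeff (m+3) c
      + ((a+b)^2 - 4*(a*b)) * (((m:RR)+1) * coeff (m+1) c)
      = (2*(m:RR)+5) * ((a+b) * coeff (m+2) c) := by
    intro m
    have h := congrArg (coeff (m+3)) hODE
    simp only [map_add, add_mul, coeff_C_mul] at h
    have t1 : coeff (m+3) (X * (d⁄dX RR c)) = coeff (m+3) c * ((m+2:ℕ)+1 : RR) :=
      calc coeff (m+3) (X * (d⁄dX RR c)) = coeff (m+2) (d⁄dX RR c) :=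
            coeff_succ_X_mul (m+2) _
        _ = coeff (m+3) c * ((m+2:ℕ)+1 : RR) := coeff_derivative c (m+2)
    have t2 : coeff (m+3) (X*(X*(X*(d⁄dX RR c)))) = coeff (m+1) c * ((m:ℕ)+1 : RR) :=
      calc coeff (m+3) (X*(X*(X*(d⁄dX RR c))))
            = coeff (m+2) (X*(X*(d⁄dX RR c))) := coeff_succ_X_mul (m+2) _
        _ = coeff (m+1) (X*(d⁄dX RR c)) := coeff_succ_X_mul (m+1) _
        _ = coeff m (d⁄dX RR c) := coeff_succ_X_mul m _
        _ = coeff (m+1) c * ((m:ℕ)+1 : RR) := coeff_derivative c m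
    have t3 : coeff (m+3) (X*(X*(d⁄dX RR c))) = coeff (m+2) c * ((m+1:ℕ)+1 : RR) :=
      calc coeff (m+3) (X*(X*(d⁄dX RR c)))
            = coeff (m+2) (X*(d⁄dX RR c)) := coeff_succ_X_mul (m+2) _
        _ = coeff (m+1) (d⁄dX RR c) := coeff_succ_X_mul (m+1) _
        _ = coeff (m+2) c * ((m+1:ℕ)+1 : RR) := coeff_derivative c (m+1)
    have t4 : coeff (m+3) (X*c) = coeff (m+2) c := coeff_succ_X_mul (m+2) _
    have t5 : coeff (m+3) (2*X : RR⟦X⟧) = 0 := by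
      rw [two_mul, map_add, coeff_X]
      simp
    rw [t1, t2, t3, t4, t5] at h
    push_cast at h
    linear_combination h
  -- base values of the Narayana polynomial sums
  have base1 : NN a b 0 = 0 := by simp [NN]
  have base2 : NN a b 1 = 1 := by
    simp [NN, narayana]
  have base3 : NN a b 2 = a + b := by
    simp [NN, Finset.sum_range_succ, narayana, Nat.choose_one_right]
    norm_num
    ring
  have main : ∀ m : ℕ, coeff m c = NN a b m ∧ coeff (m+1) c = NN a b (m+1)
      ∧ coeff (m+2) c = NN a b (m+2) := by
    intro m
    induction m with
    | zero => exact ⟨by rw [h0, base1], by rw [h1, base2], by rw [h2, base3]⟩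
    | succ k ih =>
      refine ⟨ih.2.1, ih.2.2, ?_⟩
      show coeff (k+3) c = NN a b (k+3)
      have h := hstep k
      rw [ih.2.1, ih.2.2] at h
      have nr := nar_rec a b k
      rw [Algebra.smul_def, Algebra.smul_def, Algebra.smul_def] at nr
      have e4 : (algebraMap ℚ RR) ((k:ℚ)+4) = ((k:RR)+4) := by
        simp [map_add, map_natCast, map_ofNat]
      have e1 : (algebraMap ℚ RR) ((k:ℚ)+1) = ((k:RR)+1) := by
        simp [map_add, map_natCast, map_ofNat]
      have e25 : (algebraMap ℚ RR) (2*(k:ℚ)+5) = (2*(k:RR)+5) := by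
        simp [map_add, map_mul, map_natCast, map_ofNat]
      rw [e4, e1, e25] at nr
      exact mul_left_cancel₀ (hchar k) (by linear_combination h - nr)
  intro n hn
  exact (main n).1
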